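/- If E is not a parent of Y, MI is nonempty, and m satisfies m_min ≤ m ≤ d, then S_AS^m is invariant, i.e., E and Y are d-separated given S_AS^m. -/

import Mathlib

/-- Nodes of the graph: the environment node `E`, predictor nodes `V j` for
`j ∈ {1, …, d}` (represented by `Fin d`), and the response node `Y`. -/
inductive Node (d : ℕ) : Type where
  | E : Node d
  | V : Fin d → Node d
  | Y : Node d
deriving DecidableEq

/-- A directed acyclic graph on `{E} ∪ {1, …, d} ∪ {Y}` in which `E` has no
parents (`E` is exogenous). -/
structure CGraph (d : ℕ) where
  adj : Node d → Node d → Prop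
  acyclic : ∀ v, ¬ Relation.TransGen adj v v
  exogenous : ∀ v, ¬ adj v Node.E

namespace CGraph

variable {d : ℕ} (G : CGraph d)

/-- Undirected adjacency: an edge between `u` and `v` in either direction. -/
def Edge (u v : Node d) : Prop := G.adj u v ∨ G.adj v u

/-- `p` is a path between `a` and `b`: a duplicate-free list of nodes starting
at `a`, ending at `b`, with consecutive nodes adjacent (in either direction). -/
def IsPath (p : List (Node d)) (a b : Node d) : Prop :=
  p.head? = some a ∧ p.getLast? = some b ∧ p.Nodup ∧ p.Chain' G.Edge

/-- `x` is a (strict) descendant of `v`. -/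
def Desc (v x : Node d) : Prop := Relation.TransGen G.adj v x

/-- The consecutive triple `u, m, w` on a path blocks the path given `C`:
either `m` is a non-collider lying in `C`, or `m` is a collider such that
neither `m` nor any of its descendants lies in `C`. -/
def BlockedAt (C : Set (Node d)) (u m w : Node d) : Prop :=
  (¬ (G.adj u m ∧ G.adj w m) ∧ m ∈ C) ∨
  ((G.adj u m ∧ G.adj w m) ∧ m ∉ C ∧ ∀ x, G.Desc m x → x ∉ C)

/-- A path `p` is blocked by `C` if some consecutive triple on it blocks it. -/
def Blocked (C : Set (Node d)) (p : List (Node d)) : Prop :=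
  ∃ q u m w r, p = q ++ u :: m :: w :: r ∧ G.BlockedAt C u m w

/-- `a` and `b` are d-separated given `C`: every path between them is blocked. -/
def DSep (a b : Node d) (C : Set (Node d)) : Prop :=
  ∀ p, G.IsPath p a b → G.Blocked C p

/-- `S ⊆ {1, …, d}` is invariant if `E` and `Y` are d-separated given `S`. -/
def Invariant (S : Set (Fin d)) : Prop := G.DSep Node.E Node.Y (Node.V '' S)

/-- `S` is minimally invariant if it is invariant and no strict subset of `S`
is invariant. -/
def MinInvariant (S : Set (Fin d)) : Prop :=
  G.Invariant S ∧ ∀ S', S' ⊂ S → ¬ G.Invariant S'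

/-- `S_AS`: the union of all minimally invariant sets. -/
def SAS : Set (Fin d) := ⋃₀ {S | G.MinInvariant S}

/-- `S_ICP`: the intersection of all invariant sets (`∅` if there are none). -/
def SICP : Set (Fin d) :=
  {j | (∃ S, G.Invariant S) ∧ ∀ S, G.Invariant S → j ∈ S}

/-- `S_AS^m`: the union of all minimally invariant sets of cardinality `≤ m`. -/
def SASm (m : ℕ) : Set (Fin d) := ⋃₀ {S | G.MinInvariant S ∧ S.ncard ≤ m}

/-- The parents of `Y` among `{1, …, d}`. -/
def paY : Set (Fin d) := {j | G.adj (Node.V j) Node.Y}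

/-- The children of `E` among `{1, …, d}`. -/
def chE : Set (Fin d) := {j | G.adj Node.E (Node.V j)}

/-- The ancestors of `Y` among `{1, …, d}`. -/
def anY : Set (Fin d) := {j | Relation.TransGen G.adj (Node.V j) Node.Y}

/-- `PA(A)`: the union of the parent sets of the elements of `A ⊆ {1, …, d}`. -/
def paOf (A : Set (Fin d)) : Set (Fin d) := {j | ∃ i ∈ A, G.adj (Node.V j) (Node.V i)}

end CGraph

section ListHelpers
variable {α : Type*}

lemma chain'_getElem {r : α → α → Prop} {l : List α} (h : List.Chain' r l)
    {i : ℕ} (hi : i + 1 < l.length) : r (l[i]'(by omega)) (l[i+1]'hi) := by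
  have := List.isChain_iff_getElem.mp h i (by omega)
  simpa using this

lemma chain'_transGen {r : α → α → Prop} {l : List α} (h : List.Chain' r l) :
    ∀ {i j : ℕ}, (hij : i < j) → (hj : j < l.length) →
      Relation.TransGen r (l[i]'(by omega)) (l[j]'hj) := by
  intro i j hij hj
  induction j with
  | zero => omega
  | succ n ihn =>
    rcases Nat.lt_or_ge i n with h' | h'
    · exact (ihn h' (by omega)).tail (chain'_getElem h hj)
    · have hin : i = n := by omega
      subst hin
      exact Relation.TransGen.single (chain'_getElem h hj)

lemma exists_dup_split : ∀ {l : List α}, ¬ l.Nodup →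
    ∃ (l1 : List α) (x : α) (l2 l3 : List α), l = l1 ++ x :: (l2 ++ x :: l3) := by
  intro l
  induction l with
  | nil => simp
  | cons a t ih =>
    intro h
    by_cases ha : a ∈ t
    · obtain ⟨s, u, rfl⟩ := List.append_of_mem ha
      exact ⟨[], a, s, u, by simp⟩
    · have ht : ¬ t.Nodup := fun hn => h (List.nodup_cons.mpr ⟨ha, hn⟩)
      obtain ⟨l1, x, l2, l3, rfl⟩ := ih ht
      exact ⟨a :: l1, x, l2, l3, by simp⟩

lemma two_le_length_of_ne {l : List α} {a b : α} (hh : l.head? = some a)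
    (hl : l.getLast? = some b) (hab : a ≠ b) : 2 ≤ l.length := by
  match l with
  | [] => simp at hh
  | [x] =>
    simp at hh hl
    exact absurd (hh.symm.trans hl) hab
  | x :: y :: t =>
    simp only [List.length_cons]
    omega

lemma getElem_zero_of_head? {l : List α} {a : α} (h : l.head? = some a) :
    ∃ hl : 0 < l.length, l[0] = a := by
  cases l with
  | nil => simp at h
  | cons x t =>
    refine ⟨by simp, ?_⟩
    simpa using h

lemma getElem_last_of_getLast? {l : List α} {a : α} (h : l.getLast? = some a) :
    ∃ hl : 0 < l.length, l[l.length - 1]'(by omega) = a := by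
  cases l with
  | nil => simp at h
  | cons x t =>
    refine ⟨by simp, ?_⟩
    rw [← List.getLast_eq_getElem (l := x :: t) (by simp)]
    rw [List.getLast?_eq_getLast (by simp), Option.some_inj] at h
    exact h

lemma getElem_eq_of_idx_eq (l : List α) {i j : ℕ} (h : i = j) (hj : j < l.length) :
    l[i]'(h ▸ hj) = l[j]'hj := by subst h; rfl

end ListHelpers

namespace CGraph

variable {d : ℕ} (G : CGraph d)

lemma no_two_cycle {a b : Node d} (h1 : G.adj a b) (h2 : G.adj b a) : False :=
  G.acyclic a ((Relation.TransGen.single h1).tail h2)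

lemma not_transGen_E {a : Node d} : ¬ Relation.TransGen G.adj a Node.E := fun h => by
  cases h with
  | single h => exact G.exogenous _ h
  | tail _ h => exact G.exogenous _ h

lemma blocked_iff {C : Set (Node d)} {p : List (Node d)} :
    G.Blocked C p ↔ ∃ i, ∃ h : i + 2 < p.length,
      G.BlockedAt C (p[i]'(by omega)) (p[i+1]'(by omega)) (p[i+2]'h) := by
  constructor
  · rintro ⟨q, u, m, w, r, rfl, hb⟩
    refine ⟨q.length, by simp only [List.length_append, List.length_cons]; omega, ?_⟩
    have e1 : (q ++ u :: m :: w :: r)[q.length]'(by simp only [List.length_append, List.length_cons]; omega) = u := by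
      rw [List.getElem_append_right (le_refl _)]; simp
    have e2 : (q ++ u :: m :: w :: r)[q.length+1]'(by simp only [List.length_append, List.length_cons]; omega) = m := by
      rw [List.getElem_append_right (by omega)]
      simp [Nat.add_sub_cancel_left]
    have e3 : (q ++ u :: m :: w :: r)[q.length+2]'(by simp only [List.length_append, List.length_cons]; omega) = w := by
      rw [List.getElem_append_right (by omega)]
      simp [Nat.add_sub_cancel_left]
    rw [e1, e2, e3]
    exact hb
  · rintro ⟨i, hlen, hb⟩
    refine ⟨p.take i, p[i], p[i+1], p[i+2], p.drop (i+3), ?_, hb⟩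
    have h3 : p.drop i = p[i] :: p[i+1] :: p[i+2] :: p.drop (i+3) := by
      rw [List.drop_eq_getElem_cons (by omega), List.drop_eq_getElem_cons (by omega),
        List.drop_eq_getElem_cons (by omega)]
    conv_lhs => rw [← List.take_append_drop i p]
    rw [h3]

lemma exists_directed_path {a b : Node d} (h : Relation.TransGen G.adj a b) :
    ∃ l : List (Node d), l.Chain' G.adj ∧ l.head? = some a ∧ l.getLast? = some b ∧
      l.Nodup ∧ 2 ≤ l.length := by
  classical
  have hab : a ≠ b := fun he => G.acyclic a (he ▸ h)
  have H : ∀ {x y : Node d}, Relation.TransGen G.adj x y →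
      ∃ l : List (Node d), l.Chain' G.adj ∧ l.head? = some x ∧ l.getLast? = some y := by
    intro x y hxy
    induction hxy with
    | @single c hac =>
      exact ⟨[x, c], List.isChain_pair.mpr hac, by simp, by simp⟩
    | @tail b' c' _ hbc ih =>
      obtain ⟨l, hc, hh, hl⟩ := ih
      refine ⟨l ++ [c'], ?_, ?_, by simp [List.getLast?_append]⟩
      · refine List.isChain_append.mpr ⟨hc, List.isChain_singleton _, ?_⟩
        intro x hx y hy
        simp only [List.head?_cons, Option.mem_some_iff] at hy
        rw [hl, Option.mem_some_iff] at hx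
        subst hx; subst hy
        exact hbc
      · cases l with
        | nil => simp at hh
        | cons x xs => simpa using hh
  obtain ⟨l0, hc0, hh0, hl0⟩ := H h
  have main : ∀ n, ∀ l : List (Node d), l.length = n → l.Chain' G.adj →
      l.head? = some a → l.getLast? = some b →
      ∃ l' : List (Node d), l'.Chain' G.adj ∧ l'.head? = some a ∧ l'.getLast? = some b ∧
        l'.Nodup ∧ 2 ≤ l'.length := ?_
  · exact main l0.length l0 rfl hc0 hh0 hl0
  intro n
  induction n using Nat.strong_induction_on with
  | _ n ih =>
    intro l hn hc hh hl
    by_cases hnd : l.Nodup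
    · exact ⟨l, hc, hh, hl, hnd, two_le_length_of_ne hh hl hab⟩
    · obtain ⟨l1, x, l2, l3, rfl⟩ := exists_dup_split hnd
      have hA := List.isChain_append.mp hc
      have hB : List.Chain' G.adj ((x :: l2) ++ (x :: l3)) := by
        simpa [List.Chain'] using hA.2.1
      have hB' := List.isChain_append.mp hB
      have hc1 : List.Chain' G.adj (l1 ++ x :: l3) := by
        refine List.isChain_append.mpr ⟨hA.1, hB'.2.1, ?_⟩
        intro u hu v hv
        simp only [List.head?_cons, Option.mem_some_iff] at hv
        subst hv
        exact hA.2.2 u hu x (by simp)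
      have hh1 : (l1 ++ x :: l3).head? = some a := by
        cases l1 with
        | nil => simpa using hh
        | cons y ys => simpa using hh
      have hl1 : (l1 ++ x :: l3).getLast? = some b := by
        obtain ⟨v, hv⟩ : ∃ v, (x :: l3).getLast? = some v :=
          ⟨_, List.getLast?_eq_getLast (by simp)⟩
        rw [show x :: (l2 ++ x :: l3) = (x :: l2) ++ (x :: l3) by simp] at hl
        rw [List.getLast?_append, List.getLast?_append, hv] at hl
        rw [List.getLast?_append, hv]
        simpa using hl
      refine ih (l1 ++ x :: l3).length ?_ _ rfl hc1 hh1 hl1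
      rw [← hn]
      simp only [List.length_append, List.length_cons]
      omega

lemma find_collider (t m0 : Node d)
    (hterm : ∀ x, Relation.ReflTransGen G.adj m0 x → ¬ G.adj x t) :
    ∀ (rest : List (Node d)) (b a : Node d),
      List.Chain' G.Edge (a :: b :: rest) →
      (a :: b :: rest).getLast? = some t →
      G.adj a b →
      Relation.ReflTransGen G.adj m0 a →
      ∃ q u c w r, a :: b :: rest = q ++ u :: c :: w :: r ∧
        G.adj u c ∧ G.adj w c ∧ Relation.TransGen G.adj m0 c := by
  intro rest
  induction rest with
  | nil =>
    intro b a hc hl hab hma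
    exfalso
    have hbt : b = t := by simpa using hl
    exact hterm a hma (hbt ▸ hab)
  | cons c0 rest' ih =>
    intro b a hc hl hab hma
    have hc' : List.Chain' G.Edge (b :: c0 :: rest') := hc.tail
    have hbc0 : G.Edge b c0 := hc'.rel_head
    by_cases hrev : G.adj c0 b
    · exact ⟨[], a, b, c0, rest', rfl, hab, hrev,
        Relation.TransGen.trans_right hma (Relation.TransGen.single hab)⟩
    · have hfwd : G.adj b c0 := hbc0.resolve_right hrev
      have hl' : (b :: c0 :: rest').getLast? = some t := by
        rw [← hl]; rfl
      obtain ⟨q, u, c, w, r, heq, h1, h2, h3⟩ := ih c0 b hc' hl' hfwd (hma.tail hab)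
      refine ⟨a :: q, u, c, w, r, ?_, h1, h2, h3⟩
      rw [List.cons_append, ← heq]

lemma invariant_inter_anY {S : Set (Fin d)} (hS : G.Invariant S) :
    G.Invariant (S ∩ G.anY) := by
  intro p hp
  obtain ⟨q, u, m, w, r, hdec, hb⟩ := hS p hp
  obtain ⟨hh, hl, hnd, hc⟩ := hp
  have hcs : List.Chain' G.Edge (u :: m :: w :: r) := by
    rw [hdec] at hc
    exact (List.isChain_append.mp hc).2.1
  have hum : G.Edge u m := hcs.rel_head
  have hmw : G.Edge m w := hcs.tail.rel_head
  rcases hb with ⟨hnc, hmem⟩ | ⟨hcol, h1, h2⟩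
  · obtain ⟨j, hjS, rfl⟩ := hmem
    by_cases hjA : j ∈ G.anY
    · exact ⟨q, u, _, w, r, hdec, Or.inl ⟨hnc, ⟨j, ⟨hjS, hjA⟩, rfl⟩⟩⟩
    · have hjY : ¬ Relation.TransGen G.adj (Node.V j) Node.Y := hjA
      have hno : ∀ y, Relation.TransGen G.adj (Node.V j) y →
          y ∉ Node.V '' (S ∩ G.anY) := by
        rintro y hy ⟨j', hj', rfl⟩
        exact hjY (hy.trans hj'.2)
      have hdir : G.adj (Node.V j) w ∨ G.adj (Node.V j) u := by
        rcases hmw with hd | hd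
        · exact Or.inl hd
        · rcases hum with hd' | hd'
          · exact absurd ⟨hd', hd⟩ hnc
          · exact Or.inr hd'
      rcases hdir with hfw | hbw
      · -- forward toward Y
        obtain ⟨v, hv⟩ : ∃ v, (Node.V j :: w :: r).getLast? = some v :=
          ⟨_, List.getLast?_eq_getLast (by simp)⟩
        have hvY : v = Node.Y := by
          rw [hdec, show q ++ u :: Node.V j :: w :: r
              = (q ++ [u]) ++ (Node.V j :: w :: r) by simp,
            List.getLast?_append, hv] at hl
          simpa using hl
        obtain ⟨q', u', c, w', r', heq, hx1, hx2, hx3⟩ :=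
          G.find_collider Node.Y (Node.V j)
            (fun x hx hxy => hjY (Relation.TransGen.trans_right hx (Relation.TransGen.single hxy)))
            r w (Node.V j) hcs.tail (hvY ▸ hv) hfw Relation.ReflTransGen.refl
        refine ⟨q ++ u :: q', u', c, w', r', ?_,
          Or.inr ⟨⟨hx1, hx2⟩, hno c hx3, fun x hx => hno x (hx3.trans hx)⟩⟩
        rw [hdec, heq]
        simp
      · -- backward toward E
        have hpre : p = (q ++ [u, Node.V j]) ++ w :: r := by rw [hdec]; simp
        have hcpre : List.Chain' G.Edge (q ++ [u, Node.V j]) := by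
          rw [hpre] at hc
          exact (List.isChain_append.mp hc).1
        have hrev : (q ++ [u, Node.V j]).reverse = Node.V j :: u :: q.reverse := by simp
        have hcrev : List.Chain' G.Edge (Node.V j :: u :: q.reverse) := by
          rw [← hrev]
          exact List.isChain_reverse.mpr (hcpre.imp fun _ _ hab => Or.symm hab)
        have hhead : (q ++ [u, Node.V j]).head? = some Node.E := by
          rw [hdec] at hh
          cases q with
          | nil => simpa using hh
          | cons a tq => simpa using hh
        have hlrev : (Node.V j :: u :: q.reverse).getLast? = some Node.E := by
          rw [← hrev, List.getLast?_reverse]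
          exact hhead
        obtain ⟨q', u', c, w', r', heq, hx1, hx2, hx3⟩ :=
          G.find_collider Node.E (Node.V j) (fun x _ hxE => G.exogenous x hxE)
            q.reverse u (Node.V j) hcrev hlrev hbw Relation.ReflTransGen.refl
        have hpre2 : q ++ [u, Node.V j] = (q' ++ u' :: c :: w' :: r').reverse := by
          rw [← heq, ← hrev, List.reverse_reverse]
        refine ⟨r'.reverse, w', c, u', q'.reverse ++ w :: r, ?_,
          Or.inr ⟨⟨hx2, hx1⟩, hno c hx3, fun x hx => hno x (hx3.trans hx)⟩⟩
        rw [hpre, hpre2]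
        simp
  · exact ⟨q, u, m, w, r, hdec, Or.inr ⟨hcol,
      fun hmC => h1 (Set.image_mono Set.inter_subset_left hmC),
      fun x hx hxC => h2 x hx (Set.image_mono Set.inter_subset_left hxC)⟩⟩

lemma minInvariant_subset_anY {S : Set (Fin d)} (h : G.MinInvariant S) : S ⊆ G.anY := by
  by_contra hns
  have h1 : S ∩ G.anY ⊂ S :=
    ⟨Set.inter_subset_left, fun hsub => hns fun x hx => ((hsub hx).2)⟩
  exact h.2 _ h1 (G.invariant_inter_anY h.1)

set_option maxHeartbeats 2000000 in
lemma invariant_union {S1 S2 : Set (Fin d)} (hS1 : G.Invariant S1) (hS2 : S2 ⊆ G.anY) :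
    G.Invariant (S1 ∪ S2) := by
  classical
  intro p hp
  by_contra hop
  obtain ⟨hh, hl, hnd, hc⟩ := hp
  have hC1C : (Node.V '' S1 : Set (Node d)) ⊆ Node.V '' (S1 ∪ S2) :=
    Set.image_mono Set.subset_union_left
  have hopen : ∀ (i : ℕ) (hi : i + 2 < p.length),
      ¬ G.BlockedAt (Node.V '' (S1 ∪ S2)) (p[i]'(by omega)) (p[i+1]'(by omega)) (p[i+2]'hi) := by
    intro i hi hb
    exact hop (G.blocked_iff.mpr ⟨i, hi, hb⟩)
  have hBadne : ∃ i, ∃ hi : i + 2 < p.length,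
      (G.adj (p[i]'(by omega)) (p[i+1]'(by omega)) ∧
        G.adj (p[i+2]'hi) (p[i+1]'(by omega))) ∧
      (p[i+1]'(by omega)) ∉ Node.V '' S1 ∧
      ∀ x, G.Desc (p[i+1]'(by omega)) x → x ∉ Node.V '' S1 := by
    obtain ⟨i, hi, hb⟩ := G.blocked_iff.mp (hS1 p ⟨hh, hl, hnd, hc⟩)
    rcases hb with ⟨hnc, hm⟩ | ⟨hcol, h1, h2⟩
    · exact absurd (Or.inl ⟨hnc, hC1C hm⟩) (hopen i hi)
    · exact ⟨i, hi, hcol, h1, h2⟩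
  obtain ⟨i0, hi0, hcol0, hnc0, hd0, hi0min⟩ :
      ∃ i0, ∃ hi0 : i0 + 2 < p.length,
        (G.adj (p[i0]'(by omega)) (p[i0+1]'(by omega)) ∧
          G.adj (p[i0+2]'hi0) (p[i0+1]'(by omega))) ∧
        ((p[i0+1]'(by omega)) ∉ Node.V '' S1) ∧
        (∀ x, G.Desc (p[i0+1]'(by omega)) x → x ∉ Node.V '' S1) ∧
        (∀ j, j < i0 → ¬ ∃ hj : j + 2 < p.length,
          (G.adj (p[j]'(by omega)) (p[j+1]'(by omega)) ∧
            G.adj (p[j+2]'hj) (p[j+1]'(by omega))) ∧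
          ((p[j+1]'(by omega)) ∉ Node.V '' S1) ∧
          ∀ x, G.Desc (p[j+1]'(by omega)) x → x ∉ Node.V '' S1) := by
    obtain ⟨hi0, h1, h2, h3⟩ := Nat.find_spec hBadne
    exact ⟨Nat.find hBadne, hi0, h1, h2, h3, fun j hj => Nat.find_min hBadne hj⟩
  -- the collider is an ancestor of Y
  have hcY : Relation.TransGen G.adj (p[i0+1]'(by omega)) Node.Y := by
    by_cases hmC : (p[i0+1]'(by omega)) ∈ Node.V '' (S1 ∪ S2)
    · obtain ⟨j, hj, hje⟩ := hmC
      rcases hj with hj1 | hj2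
      · exact absurd (⟨j, hj1, hje⟩ : _ ∈ Node.V '' S1) hnc0
      · rw [← hje]; exact hS2 hj2
    · have h3 : ¬ ∀ x, G.Desc (p[i0+1]'(by omega)) x → x ∉ Node.V '' (S1 ∪ S2) := by
        intro hall
        exact hopen i0 hi0 (Or.inr ⟨hcol0, hmC, hall⟩)
      push_neg at h3
      obtain ⟨x, hx, hxC⟩ := h3
      obtain ⟨j, hj, rfl⟩ := hxC
      rcases hj with hj1 | hj2
      · exact absurd ⟨j, hj1, rfl⟩ (hd0 _ hx)
      · exact Relation.TransGen.trans hx (hS2 hj2)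
  obtain ⟨π, hπc, hπh, hπl, hπnd, hπlen⟩ := G.exists_directed_path hcY
  obtain ⟨hπpos, hπ0⟩ := getElem_zero_of_head? hπh
  obtain ⟨hπpos', hπlast⟩ := getElem_last_of_getLast? hπl
  have hcmem : (p[i0+1]'(by omega)) ∈ π := by
    rw [← hπ0]; exact List.getElem_mem _
  have hkne : ∃ i, ∃ hi : i < p.length, (p[i]'hi) ∈ π := ⟨i0+1, by omega, hcmem⟩
  obtain ⟨k, hklt, hkmem, hkmin, hkle⟩ :
      ∃ k, ∃ hk : k < p.length, ((p[k]'hk) ∈ π) ∧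
        (∀ j, j < k → ¬ ∃ hj : j < p.length, (p[j]'hj) ∈ π) ∧ k ≤ i0 + 1 := by
    obtain ⟨hklt, hkmem⟩ := Nat.find_spec hkne
    exact ⟨Nat.find hkne, hklt, hkmem, fun j hj => Nat.find_min hkne hj,
      Nat.find_min' hkne ⟨by omega, hcmem⟩⟩
  have hppos : 0 < p.length := by omega
  have hp0 : p[0]'hppos = Node.E := (getElem_zero_of_head? hh).2
  have hplast : p[p.length-1]'(by omega) = Node.Y := (getElem_last_of_getLast? hl).2
  have hk1 : 1 ≤ k := by
    by_contra hk0
    have hk0' : k = 0 := by omega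
    subst hk0'
    obtain ⟨s, hs, hse⟩ := List.mem_iff_getElem.mp hkmem
    rcases Nat.eq_zero_or_pos s with rfl | hspos
    · have hce : (p[i0+1]'(by omega)) = Node.E := by
        rw [← hπ0, hse, hp0]
      have h01 : i0 + 1 = 0 := by
        have h00 : (p[i0+1]'(by omega)) = p[0]'hppos := by rw [hce, hp0]
        exact (hnd.getElem_inj_iff).mp h00
      omega
    · have ht2 := chain'_transGen hπc hspos hs
      rw [hπ0, hse, hp0] at ht2
      exact G.not_transGen_E ht2
  obtain ⟨t, ht, hte⟩ := List.mem_iff_getElem.mp hkmem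
  have hkY : (p[k]'hklt) ≠ Node.Y := by
    intro hky
    have hkeq : k = p.length - 1 := (hnd.getElem_inj_iff).mp (hky.trans hplast.symm)
    omega
  have htlt : t + 1 < π.length := by
    by_contra hge
    have hteq : t = π.length - 1 := by omega
    have hA := getElem_eq_of_idx_eq π hteq (by omega)
    exact hkY ((hte.symm.trans hA).trans hπlast)
  -- the new path p' = p.take (k+1) ++ π.drop (t+1)
  have hplen : (p.take (k+1) ++ π.drop (t+1)).length = (k+1) + (π.length - (t+1)) := by
    rw [List.length_append, List.length_take, List.length_drop]
    omega
  have hKlen : (p.take (k+1)).length = k + 1 := by rw [List.length_take]; omega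
  have eL : ∀ (j : ℕ) (hj : j ≤ k),
      (p.take (k+1) ++ π.drop (t+1))[j]'(by rw [hplen]; omega) = p[j]'(by omega) := by
    intro j hj
    rw [List.getElem_append_left (by rw [hKlen]; omega)]
    exact List.getElem_take
  have eR : ∀ (j : ℕ) (h1 : k+1 ≤ j) (h2 : j < (k+1) + (π.length - (t+1))),
      (p.take (k+1) ++ π.drop (t+1))[j]'(by rw [hplen]; omega)
        = π[t+1+(j-(k+1))]'(by omega) := by
    intro j h1 h2
    rw [List.getElem_append_right (by rw [hKlen]; omega)]
    rw [List.getElem_drop]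
    apply getElem_eq_of_idx_eq
    rw [hKlen]
  have hπdesc : ∀ (s : ℕ) (hs1 : 1 ≤ s) (hs2 : s < π.length),
      Relation.TransGen G.adj (p[i0+1]'(by omega)) (π[s]'hs2) := by
    intro s hs1 hs2
    have := chain'_transGen hπc (by omega : 0 < s) hs2
    rwa [hπ0] at this
  have hπnC1 : ∀ (s : ℕ) (hs2 : s < π.length), (π[s]'hs2) ∉ Node.V '' S1 := by
    intro s hs2
    rcases Nat.eq_zero_or_pos s with rfl | hspos
    · rw [hπ0]; exact hnc0
    · exact hd0 _ (hπdesc s hspos hs2)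
  have hne' : p.take (k+1) ++ π.drop (t+1) ≠ [] := by
    intro hemp
    have := congrArg List.length hemp
    rw [hplen] at this
    simp at this
  have hp'path : G.IsPath (p.take (k+1) ++ π.drop (t+1)) Node.E Node.Y := by
    refine ⟨?_, ?_, ?_, ?_⟩
    · rw [List.head?_eq_head hne', List.head_eq_getElem]
      rw [show ((0:ℕ) = 0) from rfl] at *
      rw [eL 0 (by omega), hp0]
    · rw [List.getLast?_eq_getLast hne', List.getLast_eq_getElem]
      have hidx : (p.take (k+1) ++ π.drop (t+1)).length - 1
          = (k+1) + (π.length - (t+1) - 1) := by rw [hplen]; omega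
      rw [getElem_eq_of_idx_eq _ hidx (by rw [hplen]; omega)]
      rw [eR _ (by omega) (by omega)]
      rw [getElem_eq_of_idx_eq _ (by omega : t+1+((k+1) + (π.length - (t+1) - 1)-(k+1)) = π.length - 1) (by omega)]
      rw [hπlast]
    · rw [List.nodup_append]
      refine ⟨(p.take_sublist _).nodup hnd, (π.drop_sublist _).nodup hπnd, ?_⟩
      intro a ha1 b ha2 hab
      subst hab
      obtain ⟨i, hi, hie⟩ := List.mem_iff_getElem.mp ha1
      rw [hKlen] at hi
      have hia : p[i]'(by omega) = a := by rw [← hie]; exact List.getElem_take.symm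
      have haπ : a ∈ π := List.mem_of_mem_drop ha2
      have hik : i = k := by
        rcases Nat.lt_or_ge i k with hik | hik
        · exact absurd ⟨by omega, hia ▸ haπ⟩ (hkmin i (by omega))
        · omega
      obtain ⟨s, hs, hse⟩ := List.mem_iff_getElem.mp ha2
      rw [List.getElem_drop] at hse
      have hsa : π[t+1+s]'(by rw [List.length_drop] at hs; omega) = a := hse
      have hta : π[t]'ht = a := by
        rw [hte]
        exact (getElem_eq_of_idx_eq p hik (by omega)).symm.trans hia
      have : t + 1 + s = t := by
        apply (hπnd.getElem_inj_iff).mp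
        rw [hsa, hta]
      omega
    · refine List.isChain_append.mpr ⟨hc.take _, (hπc.drop _).imp (fun _ _ hab => Or.inl hab), ?_⟩
      intro x hx y hy
      have hxk : x = p[k]'hklt := by
        have hne2 : p.take (k+1) ≠ [] := by
          intro hemp
          have := congrArg List.length hemp
          rw [hKlen] at this
          simp at this
        rw [List.getLast?_eq_getLast hne2, List.getLast_eq_getElem, Option.mem_some_iff] at hx
        rw [← hx]
        rw [getElem_eq_of_idx_eq _ (by rw [hKlen]; omega : (p.take (k+1)).length - 1 = k) (by rw [hKlen]; omega)]
        exact List.getElem_take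
      have hyt : y = π[t+1]'htlt := by
        have hne3 : π.drop (t+1) ≠ [] := by
          intro hemp
          have := congrArg List.length hemp
          rw [List.length_drop] at this
          simp at this
          omega
        rw [List.head?_eq_head hne3, List.head_eq_getElem, Option.mem_some_iff] at hy
        rw [← hy, List.getElem_drop]
      rw [hxk, hyt, ← hte]
      exact Or.inl (chain'_getElem hπc htlt)
  -- now the path p' must be blocked by S1
  obtain ⟨i, hi, hb⟩ := G.blocked_iff.mp (hS1 _ hp'path)
  rw [hplen] at hi
  rcases Nat.lt_trichotomy (i+1) k with hcase | hcase | hcase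
  · -- whole triple inside the p-prefix
    rw [eL i (by omega), eL (i+1) (by omega), eL (i+2) (by omega)] at hb
    rcases hb with ⟨hnc, hm⟩ | ⟨hcol, h1, h2⟩
    · exact hopen i (by omega) (Or.inl ⟨hnc, hC1C hm⟩)
    · have hbad : ∃ hi : i + 2 < p.length,
          (G.adj (p[i]'(by omega)) (p[i+1]'(by omega)) ∧
            G.adj (p[i+2]'(by omega)) (p[i+1]'(by omega))) ∧
          (p[i+1]'(by omega)) ∉ Node.V '' S1 ∧
          ∀ x, G.Desc (p[i+1]'(by omega)) x → x ∉ Node.V '' S1 := ⟨by omega, hcol, h1, h2⟩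
      exact hi0min i (by omega) hbad
  · -- middle node is the junction z = p[k]
    rw [eL i (by omega), eL (i+1) (by omega)] at hb
    rw [eR (i+2) (by omega) (by omega)] at hb
    have hidx2 : t+1+(i+2-(k+1)) = t+1 := by omega
    rw [getElem_eq_of_idx_eq _ hidx2 (by omega)] at hb
    rcases hb with ⟨hnc, hm⟩ | ⟨hcol, h1, h2⟩
    · -- z is in C1: contradiction since z is c or a descendant of c
      rw [getElem_eq_of_idx_eq p hcase hklt] at hm
      have hnot : (p[k]'hklt) ∉ Node.V '' S1 := by
        rw [← hte]
        exact hπnC1 t ht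
      exact hnot hm
    · -- collider at z: two-cycle
      have hzf : G.adj (p[i+1]'(by omega)) (π[t+1]'htlt) := by
        rw [getElem_eq_of_idx_eq p hcase hklt, ← hte]
        exact chain'_getElem hπc htlt
      exact G.no_two_cycle hzf hcol.2
  · -- middle node is on the directed tail
    rw [eR (i+1) (by omega) (by omega), eR (i+2) (by omega) (by omega)] at hb
    have hidx3 : t+1+(i+2-(k+1)) = (t+1+(i+1-(k+1))) + 1 := by omega
    rw [getElem_eq_of_idx_eq _ hidx3 (by omega)] at hb
    have hfwd : G.adj (π[t+1+(i+1-(k+1))]'(by omega)) (π[t+1+(i+1-(k+1))+1]'(by omega)) :=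
      chain'_getElem hπc (by omega)
    rcases hb with ⟨hnc, hm⟩ | ⟨hcol, h1, h2⟩
    · exact hπnC1 _ (by omega) hm
    · exact G.no_two_cycle hfwd hcol.2

end CGraph


/-- if `E` is not a parent of `Y`, `MI` is nonempty and
`m_min ≤ m ≤ d`, then `S_AS^m` is invariant. -/
theorem SASm_invariant {d : ℕ} (G : CGraph d)
    (h : ¬ G.adj Node.E Node.Y)
    (hne : {S : Set (Fin d) | G.MinInvariant S}.Nonempty)
    (m : ℕ)
    (hmin : sInf {k : ℕ | ∃ S : Set (Fin d), G.MinInvariant S ∧ S.ncard = k} ≤ m)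
    (hmd : m ≤ d) :
    G.Invariant (G.SASm m) := by
  classical
  have hKne : {k : ℕ | ∃ S : Set (Fin d), G.MinInvariant S ∧ S.ncard = k}.Nonempty := by
    obtain ⟨S, hS⟩ := hne; exact ⟨S.ncard, S, hS, rfl⟩
  obtain ⟨S0, hS0, hcard⟩ := Nat.sInf_mem hKne
  have hS0mem : S0 ∈ {S | G.MinInvariant S ∧ S.ncard ≤ m} := ⟨hS0, by rw [hcard]; exact hmin⟩
  have hsub : S0 ⊆ G.SASm m := Set.subset_sUnion_of_mem hS0mem
  have hA : G.SASm m ⊆ G.anY := by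
    intro x hx
    obtain ⟨S, hS, hxS⟩ := Set.mem_sUnion.mp hx
    exact G.minInvariant_subset_anY hS.1 hxS
  have hinv := G.invariant_union hS0.1 hA
  rwa [Set.union_eq_self_of_subset_left hsub] at hinv
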